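/- Let t ∈ (0,1). Then λ(ℋ ∩ (ℋ + t)) + λ(ℋ ∩ (ℋ + (t−1))) = 2·log 2 + log(1/(2·sin(πt))), where ℋ + s denotes the horizontal translate {(x+s, y) : (x,y) ∈ ℋ}. -/

import Mathlib

open MeasureTheory

/-- The hyperbolic area measure on the upper half-plane: density `1/y²` w.r.t. Lebesgue. -/
noncomputable def hypMeasure : Measure (ℝ × ℝ) :=
  volume.withDensity (fun p => ENNReal.ofReal (1 / p.2 ^ 2))

/-- The set ℋ = {(x,y) : y > 0, |x| < 1/2, y ≥ (2/π)·tan(π|x|)}. -/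
def Hset : Set (ℝ × ℝ) :=
  {p | 0 < p.2 ∧ |p.1| < 1 / 2 ∧ (2 / Real.pi) * Real.tan (Real.pi * |p.1|) ≤ p.2}

/-- Horizontal translate of a subset of the plane. -/
def htrans (s : ℝ) (A : Set (ℝ × ℝ)) : Set (ℝ × ℝ) := (fun p => (p.1 + s, p.2)) '' A

open Set Real

lemma inner_int {c : ℝ} (hc : 0 < c) :
    ∫⁻ y in Ici c, ENNReal.ofReal (1 / y ^ 2) = ENNReal.ofReal (1 / c) := by
  rw [← Measure.restrict_congr_set Ioi_ae_eq_Ici]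
  have heq : ∀ y ∈ Ioi c, y ^ (-2 : ℝ) = 1 / y ^ 2 := by
    intro y hy
    have hy0 : 0 < y := hc.trans hy
    rw [Real.rpow_neg hy0.le, show ((2:ℝ)) = ((2:ℕ):ℝ) by norm_num, Real.rpow_natCast]
    simp [one_div]
  have hint : IntegrableOn (fun y : ℝ => 1 / y ^ 2) (Ioi c) := by
    exact (integrableOn_Ioi_rpow_of_lt (by norm_num : (-2:ℝ) < -1) hc).congr_fun heq measurableSet_Ioi
  rw [← ofReal_integral_eq_lintegral_ofReal hint
      (Filter.Eventually.of_forall fun y => by positivity)]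
  congr 1
  rw [← setIntegral_congr_fun measurableSet_Ioi heq, integral_Ioi_rpow_of_lt (by norm_num) hc]
  rw [show (-2:ℝ) + 1 = -1 by norm_num, Real.rpow_neg_one]
  field_simp

lemma hypSlice {a b : ℝ} {g : ℝ → ℝ} (hg : Measurable g) (hgpos : ∀ x ∈ Ioo a b, 0 < g x) :
    hypMeasure {p : ℝ × ℝ | p.1 ∈ Ioo a b ∧ g p.1 ≤ p.2 ∧ 0 < p.2} =
    ∫⁻ x in Ioo a b, ENNReal.ofReal (1 / g x) := by
  set A : Set (ℝ × ℝ) := {p | p.1 ∈ Ioo a b ∧ g p.1 ≤ p.2 ∧ 0 < p.2} with hAdef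
  have hA : MeasurableSet A := by
    have h1 : MeasurableSet {p : ℝ × ℝ | p.1 ∈ Ioo a b} :=
      measurable_fst measurableSet_Ioo
    have h2 : MeasurableSet {p : ℝ × ℝ | g p.1 ≤ p.2} :=
      measurableSet_le (hg.comp measurable_fst) measurable_snd
    have h3 : MeasurableSet {p : ℝ × ℝ | 0 < p.2} :=
      measurableSet_lt measurable_const measurable_snd
    exact (h1.inter (h2.inter h3) : _)
  have hfm : Measurable (fun p : ℝ × ℝ => ENNReal.ofReal (1 / p.2 ^ 2)) := by
    exact (measurable_const.div (measurable_snd.pow measurable_const)).ennreal_ofReal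
  rw [hypMeasure, withDensity_apply _ hA, ← lintegral_indicator hA, Measure.volume_eq_prod,
    lintegral_prod _ ((hfm.indicator hA).aemeasurable)]
  have key : ∀ x : ℝ, (∫⁻ y, A.indicator (fun p : ℝ × ℝ => ENNReal.ofReal (1 / p.2 ^ 2)) (x, y)) =
      (Ioo a b).indicator (fun x => ENNReal.ofReal (1 / g x)) x := by
    intro x
    by_cases hx : x ∈ Ioo a b
    · rw [indicator_of_mem hx]
      have : ∀ y : ℝ, A.indicator (fun p : ℝ × ℝ => ENNReal.ofReal (1 / p.2 ^ 2)) (x, y) =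
          (Ici (g x)).indicator (fun y => ENNReal.ofReal (1 / y ^ 2)) y := by
        intro y
        by_cases hy : g x ≤ y
        · rw [indicator_of_mem (mem_Ici.mpr hy),
            indicator_of_mem (show (x, y) ∈ A from ⟨hx, hy, (hgpos x hx).trans_le hy⟩)]
        · rw [indicator_of_notMem (fun h => hy (mem_Ici.mp h)),
            indicator_of_notMem (show (x, y) ∉ A from fun h => hy h.2.1)]
      rw [lintegral_congr this, lintegral_indicator measurableSet_Ici, inner_int (hgpos x hx)]
    · rw [indicator_of_notMem hx]
      have : ∀ y : ℝ, A.indicator (fun p : ℝ × ℝ => ENNReal.ofReal (1 / p.2 ^ 2)) (x, y) = 0 := by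
        intro y
        exact indicator_of_notMem (fun h => hx h.1) _
      rw [lintegral_congr this, lintegral_zero]
  rw [lintegral_congr key, lintegral_indicator measurableSet_Ioo]

lemma key_piece {a b e c : ℝ} (hab : a ≤ b) (he : e ≠ 0)
    (hsin : ∀ x ∈ Icc a b, 0 < Real.sin (e * x + c))
    (hcos : ∀ x ∈ Icc a b, 0 ≤ Real.cos (e * x + c)) :
    ∫⁻ x in Ioc a b, ENNReal.ofReal (π / 2 * (Real.cos (e * x + c) / Real.sin (e * x + c))) =
    ENNReal.ofReal (π / (2 * e) *
      (Real.log (Real.sin (e * b + c)) - Real.log (Real.sin (e * a + c)))) := by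
  set φ : ℝ → ℝ := fun x => π / 2 * (Real.cos (e * x + c) / Real.sin (e * x + c)) with hφ
  have hφc : ContinuousOn φ (Icc a b) := by
    apply continuousOn_const.mul
    exact ((Real.continuous_cos.comp (by continuity)).continuousOn.div
      ((Real.continuous_sin.comp (by continuity)).continuousOn)
      (fun x hx => (hsin x hx).ne'))
  have hint : IntegrableOn φ (Ioc a b) :=
    (hφc.integrableOn_Icc).mono_set Ioc_subset_Icc_self
  have hnn : ∀ x ∈ Ioc a b, 0 ≤ φ x := fun x hx => by
    have hx' : x ∈ Icc a b := Ioc_subset_Icc_self hx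
    have := hsin x hx'
    have := hcos x hx'
    positivity
  rw [← ofReal_integral_eq_lintegral_ofReal hint
    ((ae_restrict_iff' measurableSet_Ioc).mpr (Filter.Eventually.of_forall hnn))]
  congr 1
  rw [← intervalIntegral.integral_of_le hab]
  have hderiv : ∀ x ∈ uIcc a b,
      HasDerivAt (fun x => π / (2 * e) * Real.log (Real.sin (e * x + c))) (φ x) x := by
    intro x hx
    rw [uIcc_of_le hab] at hx
    have h1 : HasDerivAt (fun x : ℝ => e * x + c) e x := by
      simpa using ((hasDerivAt_id x).const_mul e).add_const c
    have h2 : HasDerivAt (fun x : ℝ => Real.sin (e * x + c)) (Real.cos (e * x + c) * e) x :=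
      h1.sin
    have h3 := ((Real.hasDerivAt_log (hsin x hx).ne').comp x h2).const_mul (π / (2 * e))
    refine h3.congr_deriv ?_
    have := (hsin x hx).ne'
    show _ = π / 2 * (Real.cos (e * x + c) / Real.sin (e * x + c))
    field_simp
  rw [intervalIntegral.integral_eq_sub_of_hasDerivAt hderiv
    (ContinuousOn.intervalIntegrable (by rwa [uIcc_of_le hab]))]
  ring

noncomputable def fH (x : ℝ) : ℝ := 2 / π * Real.tan (π * |x|)

lemma htrans_eq (s : ℝ) (A : Set (ℝ × ℝ)) :
    htrans s A = {p : ℝ × ℝ | (p.1 - s, p.2) ∈ A} := by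
  ext p
  constructor
  · rintro ⟨q, hq, rfl⟩; simpa using hq
  · intro h; exact ⟨(p.1 - s, p.2), h, by simp⟩

lemma fH_meas : Measurable fH := by
  have ht : Measurable Real.tan := by
    have : Real.tan = fun x => Real.sin x / Real.cos x := funext Real.tan_eq_sin_div_cos
    rw [this]; exact Real.measurable_sin.div Real.measurable_cos
  exact measurable_const.mul (ht.comp (measurable_const.mul measurable_abs))

lemma fH_pos {z : ℝ} (h0 : z ≠ 0) (h : |z| < 1 / 2) : 0 < fH z := by
  have hp := Real.pi_pos
  have h1 : 0 < π * |z| := by positivity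
  have h2 : π * |z| < π / 2 := by nlinarith [abs_pos.mpr h0]
  have := Real.tan_pos_of_pos_of_lt_pi_div_two h1 h2
  unfold fH; positivity

lemma fH_nonneg {z : ℝ} (h : |z| ≤ 1 / 2) : 0 ≤ fH z := by
  rcases eq_or_ne z 0 with rfl | h0
  · simp [fH]
  rcases eq_or_lt_of_le h with h2 | h2
  · unfold fH
    rw [show π * |z| = π / 2 by rw [h2]; ring, Real.tan_pi_div_two]
    simp
  · exact (fH_pos h0 h2).le

lemma fH_mono {z w : ℝ} (h : |z| ≤ |w|) (hw : |w| < 1 / 2) : fH z ≤ fH w := by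
  have hp := Real.pi_pos
  unfold fH
  have hmem : ∀ v : ℝ, |v| < 1 / 2 → π * |v| ∈ Ioo (-(π / 2)) (π / 2) := by
    intro v hv
    constructor
    · nlinarith [abs_nonneg v]
    · nlinarith
  have := Real.strictMonoOn_tan.monotoneOn (hmem z (lt_of_le_of_lt h hw)) (hmem w hw)
    (by nlinarith [abs_nonneg z])
  have h2 : 0 < 2 / π := by positivity
  nlinarith

lemma one_div_fH {z : ℝ} (h0 : 0 < z) (h1 : z ≤ 1 / 2) :
    1 / fH z = π / 2 * (Real.cos (π * z) / Real.sin (π * z)) := by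
  have hp := Real.pi_pos
  have habs : |z| = z := abs_of_pos h0
  rcases eq_or_lt_of_le h1 with h2 | h2
  · rw [fH, habs, h2]
    rw [show π * (1/2 : ℝ) = π / 2 by ring, Real.tan_pi_div_two, Real.cos_pi_div_two]
    simp
  · have hc : 0 < Real.cos (π * z) :=
      Real.cos_pos_of_mem_Ioo ⟨by nlinarith, by nlinarith⟩
    have hs : 0 < Real.sin (π * z) :=
      Real.sin_pos_of_pos_of_lt_pi (by positivity) (by nlinarith)
    rw [fH, habs, Real.tan_eq_sin_div_cos]
    field_simp

lemma inter_pos {u : ℝ} (hu0 : 0 < u) (hu1 : u < 1) :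
    Hset ∩ htrans u Hset =
      {p : ℝ × ℝ | p.1 ∈ Ioo (u - 1/2) (1/2) ∧ max (fH p.1) (fH (p.1 - u)) ≤ p.2 ∧ 0 < p.2} := by
  rw [htrans_eq]
  ext ⟨x, y⟩
  simp only [Hset, fH, mem_inter_iff, mem_setOf_eq, mem_Ioo, max_le_iff]
  constructor
  · rintro ⟨⟨hy, hx1, hf1⟩, _, hx2, hf2⟩
    rw [abs_lt] at hx1 hx2
    exact ⟨⟨by linarith [hx2.1], hx1.2⟩, ⟨hf1, hf2⟩, hy⟩
  · rintro ⟨⟨ha, hb⟩, ⟨hf1, hf2⟩, hy⟩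
    refine ⟨⟨hy, abs_lt.mpr ⟨by linarith, hb⟩, hf1⟩, hy, abs_lt.mpr ⟨by linarith, by linarith⟩, hf2⟩

lemma inter_neg {s : ℝ} (hs0 : -1 < s) (hs1 : s < 0) :
    Hset ∩ htrans s Hset =
      {p : ℝ × ℝ | p.1 ∈ Ioo (-(1/2)) (s + 1/2) ∧ max (fH p.1) (fH (p.1 - s)) ≤ p.2 ∧ 0 < p.2} := by
  rw [htrans_eq]
  ext ⟨x, y⟩
  simp only [Hset, fH, mem_inter_iff, mem_setOf_eq, mem_Ioo, max_le_iff]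
  constructor
  · rintro ⟨⟨hy, hx1, hf1⟩, _, hx2, hf2⟩
    rw [abs_lt] at hx1 hx2
    exact ⟨⟨hx1.1, by linarith [hx2.2]⟩, ⟨hf1, hf2⟩, hy⟩
  · rintro ⟨⟨ha, hb⟩, ⟨hf1, hf2⟩, hy⟩
    refine ⟨⟨hy, abs_lt.mpr ⟨ha, by linarith⟩, hf1⟩, hy, abs_lt.mpr ⟨by linarith, by linarith⟩, hf2⟩

lemma val_pos {u : ℝ} (hu0 : 0 < u) (hu1 : u < 1) :
    hypMeasure (Hset ∩ htrans u Hset) =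
      ENNReal.ofReal (-Real.log (Real.sin (π * u / 2))) := by
  have hp := Real.pi_pos
  set g : ℝ → ℝ := fun x => max (fH x) (fH (x - u)) with hg
  have hgm : Measurable g := fH_meas.max (fH_meas.comp (measurable_id.sub measurable_const))
  have hgpos : ∀ x ∈ Ioo (u - 1/2) (1/2), 0 < g x := by
    intro x hx
    rcases eq_or_ne x 0 with rfl | hx0
    · refine lt_of_lt_of_le (fH_pos (by simpa using hu0.ne') ?_) (le_max_right _ _)
      rw [abs_of_nonpos (by linarith : (0:ℝ) - u ≤ 0)]
      simp only [zero_sub, neg_neg]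
      linarith [hx.1]
    · exact lt_of_lt_of_le (fH_pos hx0 (abs_lt.mpr ⟨by linarith [hx.1], hx.2⟩)) (le_max_left _ _)
  rw [inter_pos hu0 hu1, hypSlice hgm hgpos]
  have hsplit : Ioc (u - 1/2) (u/2) ∪ Ioo (u/2) (1/2) = Ioo (u - 1/2) (1/2) :=
    Ioc_union_Ioo_eq_Ioo (by linarith) (by linarith)
  rw [← hsplit, lintegral_union measurableSet_Ioo
    (disjoint_left.mpr (fun x hx hx' => absurd hx'.1 (not_lt.mpr hx.2)))]
  -- piece 1
  have hp1 : ∫⁻ x in Ioc (u - 1/2) (u/2), ENNReal.ofReal (1 / g x) =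
      ENNReal.ofReal (-(1/2) * Real.log (Real.sin (π * u / 2))) := by
    have hcong : ∀ x ∈ Ioc (u - 1/2) (u/2),
        ENNReal.ofReal (1 / g x) =
        ENNReal.ofReal (π / 2 * (Real.cos (-π * x + π * u) / Real.sin (-π * x + π * u))) := by
      intro x hx
      have hxu : |x - u| = u - x := by
        rw [abs_of_nonpos (by linarith [hx.2] : x - u ≤ 0)]; ring
      have h1 : |x| ≤ |x - u| := by
        rw [hxu, abs_le]; constructor <;> [linarith [hx.2]; linarith [hx.2]]
      have h2 : |x - u| < 1/2 := by rw [hxu]; linarith [hx.1]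
      have hmax : g x = fH (x - u) := max_eq_right (fH_mono h1 h2)
      rw [hmax, show fH (x - u) = fH (u - x) by unfold fH; rw [← abs_neg]; ring_nf]
      rw [one_div_fH (by linarith [hx.2]) (by linarith [hx.1])]
      ring_nf
    rw [setLIntegral_congr_fun measurableSet_Ioc hcong]
    rw [key_piece (by linarith) (neg_ne_zero.mpr hp.ne') ?hs ?hc]
    case hs =>
      intro x hx
      apply Real.sin_pos_of_pos_of_lt_pi
      · nlinarith [hx.2]
      · nlinarith [hx.1]
    case hc =>
      intro x hx
      apply Real.cos_nonneg_of_mem_Icc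
      constructor
      · nlinarith [hx.2]
      · nlinarith [hx.1]
    congr 1
    rw [show -π * (u/2) + π * u = π * u / 2 by ring,
        show -π * (u - 1/2) + π * u = π / 2 by ring, Real.sin_pi_div_two, Real.log_one]
    field_simp
    ring
  -- piece 2
  have hp2 : ∫⁻ x in Ioo (u/2) (1/2 : ℝ), ENNReal.ofReal (1 / g x) =
      ENNReal.ofReal (-(1/2) * Real.log (Real.sin (π * u / 2))) := by
    have hcong : ∀ x ∈ Ioo (u/2) (1/2 : ℝ),
        ENNReal.ofReal (1 / g x) =
        ENNReal.ofReal (π / 2 * (Real.cos (π * x + 0) / Real.sin (π * x + 0))) := by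
      intro x hx
      have hx0 : 0 < x := lt_trans (by linarith) hx.1
      have hxx : |x| = x := abs_of_pos hx0
      have h1 : |x - u| ≤ |x| := by
        rw [hxx, abs_le]; constructor <;> [linarith [hx.1]; linarith]
      have hmax : g x = fH x := max_eq_left (fH_mono h1 (by rw [hxx]; exact hx.2))
      rw [hmax, show fH x = fH |x| by unfold fH; rw [abs_abs], hxx]
      rw [one_div_fH hx0 hx.2.le]
      ring_nf
    rw [setLIntegral_congr_fun measurableSet_Ioo hcong,
      Measure.restrict_congr_set Ioo_ae_eq_Ioc]
    rw [key_piece (by linarith) hp.ne' ?hs2 ?hc2]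
    case hs2 =>
      intro x hx
      apply Real.sin_pos_of_pos_of_lt_pi
      · nlinarith [hx.1]
      · nlinarith [hx.2]
    case hc2 =>
      intro x hx
      apply Real.cos_nonneg_of_mem_Icc
      constructor
      · nlinarith [hx.1]
      · nlinarith [hx.2]
    congr 1
    rw [show π * (1/2 : ℝ) + 0 = π / 2 by ring, show π * (u/2) + 0 = π * u / 2 by ring,
      Real.sin_pi_div_two, Real.log_one]
    field_simp
    ring
  have hnn : 0 ≤ -(1/2 : ℝ) * Real.log (Real.sin (π * u / 2)) := by
    have h01 : 0 < Real.sin (π * u / 2) :=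
      Real.sin_pos_of_pos_of_lt_pi (by positivity) (by nlinarith)
    have := Real.log_nonpos h01.le (Real.sin_le_one _)
    linarith
  rw [hp1, hp2, ← ENNReal.ofReal_add hnn hnn]
  congr 1
  ring

lemma val_neg {s : ℝ} (hs0 : -1 < s) (hs1 : s < 0) :
    hypMeasure (Hset ∩ htrans s Hset) =
      ENNReal.ofReal (-Real.log (Real.sin (-(π * s) / 2))) := by
  have hp := Real.pi_pos
  set g : ℝ → ℝ := fun x => max (fH x) (fH (x - s)) with hg
  have hgm : Measurable g := fH_meas.max (fH_meas.comp (measurable_id.sub measurable_const))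
  have hgpos : ∀ x ∈ Ioo (-(1/2) : ℝ) (s + 1/2), 0 < g x := by
    intro x hx
    rcases eq_or_ne x 0 with rfl | hx0
    · refine lt_of_lt_of_le (fH_pos (by simpa using hs1.ne) ?_) (le_max_right _ _)
      rw [show (0:ℝ) - s = -s by ring, abs_of_pos (by linarith : (0:ℝ) < -s)]
      linarith [hx.2]
    · exact lt_of_lt_of_le (fH_pos hx0 (abs_lt.mpr ⟨hx.1, by linarith [hx.2]⟩)) (le_max_left _ _)
  rw [inter_neg hs0 hs1, hypSlice hgm hgpos]
  have hsplit : Ioc (-(1/2) : ℝ) (s/2) ∪ Ioo (s/2) (s + 1/2) = Ioo (-(1/2) : ℝ) (s + 1/2) :=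
    Ioc_union_Ioo_eq_Ioo (by linarith) (by linarith)
  rw [← hsplit, lintegral_union measurableSet_Ioo
    (disjoint_left.mpr (fun x hx hx' => absurd hx'.1 (not_lt.mpr hx.2)))]
  -- piece 1 : g = fH x, substitution -x
  have hp1 : ∫⁻ x in Ioc (-(1/2) : ℝ) (s/2), ENNReal.ofReal (1 / g x) =
      ENNReal.ofReal (-(1/2) * Real.log (Real.sin (-(π * s) / 2))) := by
    have hcong : ∀ x ∈ Ioc (-(1/2) : ℝ) (s/2),
        ENNReal.ofReal (1 / g x) =
        ENNReal.ofReal (π / 2 * (Real.cos (-π * x + 0) / Real.sin (-π * x + 0))) := by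
      intro x hx
      have hxneg : x < 0 := lt_of_le_of_lt hx.2 (by linarith)
      have hxx : |x| = -x := abs_of_neg hxneg
      have h1 : |x - s| ≤ |x| := by
        rw [hxx, abs_le]; constructor <;> [linarith [hx.2]; linarith [hx.2]]
      have hmax : g x = fH x := max_eq_left (fH_mono h1 (by rw [hxx]; linarith [hx.1]))
      rw [hmax, show fH x = fH (-x) by unfold fH; rw [abs_neg]]
      rw [one_div_fH (by linarith : (0:ℝ) < -x) (by linarith [hx.1])]
      ring_nf
    rw [setLIntegral_congr_fun measurableSet_Ioc hcong]
    rw [key_piece (by linarith) (neg_ne_zero.mpr hp.ne') ?hs3 ?hc3]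
    case hs3 =>
      intro x hx
      apply Real.sin_pos_of_pos_of_lt_pi
      · nlinarith [hx.2]
      · nlinarith [hx.1]
    case hc3 =>
      intro x hx
      apply Real.cos_nonneg_of_mem_Icc
      constructor
      · nlinarith [hx.2]
      · nlinarith [hx.1]
    congr 1
    rw [show -π * (s/2) + 0 = -(π * s) / 2 by ring,
        show -π * (-(1/2) : ℝ) + 0 = π / 2 by ring, Real.sin_pi_div_two, Real.log_one]
    field_simp
    ring
  -- piece 2 : g = fH (x - s)
  have hp2 : ∫⁻ x in Ioo (s/2) (s + 1/2), ENNReal.ofReal (1 / g x) =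
      ENNReal.ofReal (-(1/2) * Real.log (Real.sin (-(π * s) / 2))) := by
    have hcong : ∀ x ∈ Ioo (s/2) (s + 1/2),
        ENNReal.ofReal (1 / g x) =
        ENNReal.ofReal (π / 2 * (Real.cos (π * x + -(π * s)) / Real.sin (π * x + -(π * s)))) := by
      intro x hx
      have hz : 0 < x - s := by linarith [hx.1]
      have hzx : |x - s| = x - s := abs_of_pos hz
      have h1 : |x| ≤ |x - s| := by
        rw [hzx, abs_le]; constructor <;> [linarith [hx.1]; linarith]
      have h2 : |x - s| < 1/2 := by rw [hzx]; linarith [hx.2]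
      have hmax : g x = fH (x - s) := max_eq_right (fH_mono h1 h2)
      rw [hmax, one_div_fH hz (by rw [hzx] at h2; linarith)]
      ring_nf
    rw [setLIntegral_congr_fun measurableSet_Ioo hcong,
      Measure.restrict_congr_set Ioo_ae_eq_Ioc]
    rw [key_piece (by linarith) hp.ne' ?hs4 ?hc4]
    case hs4 =>
      intro x hx
      apply Real.sin_pos_of_pos_of_lt_pi
      · nlinarith [hx.1]
      · nlinarith [hx.2]
    case hc4 =>
      intro x hx
      apply Real.cos_nonneg_of_mem_Icc
      constructor
      · nlinarith [hx.1]
      · nlinarith [hx.2]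
    congr 1
    rw [show π * (s + 1/2) + -(π * s) = π / 2 by ring,
        show π * (s/2) + -(π * s) = -(π * s) / 2 by ring, Real.sin_pi_div_two, Real.log_one]
    field_simp
    ring
  have hnn : 0 ≤ -(1/2 : ℝ) * Real.log (Real.sin (-(π * s) / 2)) := by
    have h01 : 0 < Real.sin (-(π * s) / 2) :=
      Real.sin_pos_of_pos_of_lt_pi (by nlinarith) (by nlinarith)
    have := Real.log_nonpos h01.le (Real.sin_le_one _)
    linarith
  rw [hp1, hp2, ← ENNReal.ofReal_add hnn hnn]
  congr 1
  ring

theorem stmt0 (t : ℝ) (ht : t ∈ Set.Ioo (0 : ℝ) 1) :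
    hypMeasure (Hset ∩ htrans t Hset) + hypMeasure (Hset ∩ htrans (t - 1) Hset) =
      ENNReal.ofReal (2 * Real.log 2 + Real.log (1 / (2 * Real.sin (Real.pi * t)))) := by
  obtain ⟨ht0, ht1⟩ := ht
  have hp := Real.pi_pos
  rw [val_pos ht0 ht1, val_neg (by linarith : (-1:ℝ) < t - 1) (by linarith)]
  have hs : 0 < Real.sin (π * t / 2) :=
    Real.sin_pos_of_pos_of_lt_pi (by positivity) (by nlinarith)
  have hid : Real.sin (-(π * (t - 1)) / 2) = Real.cos (π * t / 2) := by
    rw [show -(π * (t - 1)) / 2 = π / 2 - π * t / 2 by ring, Real.sin_pi_div_two_sub]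
  have hcc : 0 < Real.cos (π * t / 2) :=
    Real.cos_pos_of_mem_Ioo ⟨by nlinarith, by nlinarith⟩
  have hc : 0 < Real.sin (-(π * (t - 1)) / 2) := hid ▸ hcc
  have hdouble : Real.sin (π * t) = 2 * Real.sin (π * t / 2) * Real.cos (π * t / 2) := by
    rw [show π * t = 2 * (π * t / 2) by ring, Real.sin_two_mul]; norm_num
  have hst : 0 < Real.sin (π * t) := by rw [hdouble]; positivity
  have hnn1 : 0 ≤ -Real.log (Real.sin (π * t / 2)) := by
    have := Real.log_nonpos hs.le (Real.sin_le_one _); linarith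
  have hnn2 : 0 ≤ -Real.log (Real.sin (-(π * (t - 1)) / 2)) := by
    have := Real.log_nonpos hc.le (Real.sin_le_one _); linarith
  rw [← ENNReal.ofReal_add hnn1 hnn2]
  congr 1
  have hlog : Real.log (2 * Real.sin (π * t)) =
      2 * Real.log 2 + Real.log (Real.sin (π * t / 2)) + Real.log (Real.cos (π * t / 2)) := by
    rw [hdouble, show (2:ℝ) * (2 * Real.sin (π * t / 2) * Real.cos (π * t / 2)) =
        (2 * 2) * (Real.sin (π * t / 2) * Real.cos (π * t / 2)) by ring,
      Real.log_mul (by norm_num) (by positivity), Real.log_mul hs.ne' hcc.ne',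
      Real.log_mul two_ne_zero two_ne_zero]
    ring
  rw [hid, one_div, Real.log_inv]
  linarith [hlog]
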